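/- Let (T,σ) be a signed tree with vertex set {v, v_0, v_1, v_1', v_2} and edges v v_0, v_0 v_1, v_1 v_1', v_0 v_2 (with an arbitrary signature σ), and let L be a list assignment with L(v_1') and L(v_2) singletons and L(v) = L(v_0) = L(v_1) = C. Then the set of colors c ∈ C for which there exists an L-coloring φ of (T,σ) with φ(v) = c has size at least 8. -/

import Mathlib

open SimpleGraph

/-- The color set `C`: the vertex set of `DSG(K_6, M)`, encoding `x^+` as `(x, 1)` and `x^−`
as `(x, -1)` for `x` a vertex of `K_6`. -/
abbrev ColorC : Type := Fin 6 × ℤˣ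

/-- The perfect matching on the vertices of `K_6`: `0↔1, 2↔3, 4↔5` (i.e. `12, 34, 56`). -/
def pairFn : Fin 6 → Fin 6 := ![1, 0, 3, 2, 5, 4]

/-- The pair of a color: the matched `K_6`-vertex on the same side. -/
def pairC (c : ColorC) : ColorC := (pairFn c.1, c.2)

/-- Two colors lie in the same layer iff their `K_6`-vertices lie in the same matched pair. -/
def SameLayer (c d : ColorC) : Prop := (c.1 : ℕ) / 2 = (d.1 : ℕ) / 2

/-- The underlying graph of `DSG(K_6, M)`: `(x, s)` is adjacent to `(y, t)` iff `x ≠ y`. -/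
def DSG6 : SimpleGraph ColorC where
  Adj a b := a.1 ≠ b.1
  symm := ⟨fun _ _ h => Ne.symm h⟩
  loopless := ⟨fun _ h => h rfl⟩

/-- The sign of the `DSG(K_6, M)`-edge between colors `c` and `d`: it is
`c.2 * d.2 * π(c.1 d.1)` where `π` is the signature of `(K_6, M)` (negative exactly on the
matching `12, 34, 56`). -/
def dsgSign (c d : ColorC) : ℤˣ :=
  c.2 * d.2 * (if (c.1 : ℕ) / 2 = (d.1 : ℕ) / 2 then -1 else 1)

/-- A set of colors is paired if for all but at most one of its elements, the pair of the
element also lies in the set. -/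
def IsPaired (L : Set ColorC) : Prop := {c | c ∈ L ∧ pairC c ∉ L}.Subsingleton

/-- A set of colors is layered if it is paired and no three of its colors lie in a common
layer. -/
def IsLayered (L : Set ColorC) : Prop :=
  IsPaired L ∧ ∀ j : ℕ, {c | c ∈ L ∧ (c.1 : ℕ) / 2 = j}.ncard ≤ 2

/-- A set of colors is one-sided if all its colors lie on the same side. -/
def IsOneSided (L : Set ColorC) : Prop :=
  (∀ c ∈ L, c.2 = 1) ∨ (∀ c ∈ L, c.2 = -1)

/-- A neighbored `(2k+1)`-set: a layered set of size `2k+1` consisting of `k` pairs all on one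
side together with a single color on the other side. -/
def IsNeighbored (k : ℕ) (L : Set ColorC) : Prop :=
  IsLayered L ∧ L.ncard = 2 * k + 1 ∧
    ∃ α : ℤˣ, ∃ c ∈ L, c.2 = -α ∧ ∀ d ∈ L, d ≠ c → d.2 = α ∧ pairC d ∈ L

/-- An `L`-coloring of a signed graph `(G, σ)` with list assignment `L`: an edge-sign
preserving homomorphism `φ` of `(G, σ)` to `DSG(K_6, M)` with `φ v ∈ L v` for all `v`. -/
def IsLColoring {V : Type*} (G : SimpleGraph V) (σ : Sym2 V → ℤˣ)
    (L : V → Set ColorC) (φ : V → ColorC) : Prop :=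
  (∀ v, φ v ∈ L v) ∧
  ∀ u v : V, G.Adj u v → (φ u).1 ≠ (φ v).1 ∧ dsgSign (φ u) (φ v) = σ s(u, v)

/-- The signed tree of Lemma 3.5: vertices `v, v₀, v₁, v₁', v₂` (encoded as `0, 1, 2, 3, 4`)
with edges `v v₀, v₀ v₁, v₁ v₁', v₀ v₂`. -/
def treeT : SimpleGraph (Fin 5) :=
  SimpleGraph.fromEdgeSet {s(0, 1), s(1, 2), s(2, 3), s(1, 4)}


/-! ### Auxiliary machinery for the proof -/

/-- Compatibility of two colors along an edge of sign `s`. -/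
def compat (s : ℤˣ) (a b : ColorC) : Prop := a.1 ≠ b.1 ∧ dsgSign a b = s

/-- Abstract admissibility condition at the root, for edge signs `s01, s12, s23, s14`. -/
def adm (s01 s12 s23 s14 : ℤˣ) (c₃ c₄ c : ColorC) : Prop :=
  ∃ b1 : ColorC, compat s01 c b1 ∧ compat s14 b1 c₄ ∧
    ∃ b2 : ColorC, compat s12 b1 b2 ∧ compat s23 b2 c₃

/-- Boolean encoding of a sign. -/
def eB (u : ℤˣ) : Bool := u = 1

/-- Boolean encoding of a color. -/
def colB (c : ColorC) : Fin 6 × Bool := (c.1, eB c.2)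

/-- Boolean version of `compat`. -/
def compatB (s : Bool) (a b : Fin 6 × Bool) : Bool :=
  (a.1 != b.1) && (((a.2 == b.2) != ((a.1 : ℕ)/2 == (b.1 : ℕ)/2)) == s)

/-- List of all Boolean-encoded colors. -/
def allCB : List (Fin 6 × Bool) :=
  (List.finRange 6).flatMap fun x => [(x, true), (x, false)]

/-- Boolean version of `adm`. -/
def admB (e01 e12 e23 e14 : Bool) (d₃ d₄ d : Fin 6 × Bool) : Bool :=
  allCB.any fun b1 => compatB e01 d b1 && compatB e14 b1 d₄ &&
    allCB.any fun b2 => compatB e12 b1 b2 && compatB e23 b2 d₃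

lemma compat_iff (s : ℤˣ) (a b : ColorC) :
    compat s a b ↔ compatB (eB s) (colB a) (colB b) = true := by
  obtain ⟨x, u⟩ := a; obtain ⟨y, v⟩ := b
  rcases Int.units_eq_one_or s with rfl | rfl <;>
    rcases Int.units_eq_one_or u with rfl | rfl <;>
    rcases Int.units_eq_one_or v with rfl | rfl <;>
    by_cases h : (x : ℕ)/2 = (y : ℕ)/2 <;>
    simp [compat, compatB, dsgSign, colB, eB, h]

/-- Inverse of the Boolean encoding of colors. -/
def invB (d : Fin 6 × Bool) : ColorC := (d.1, if d.2 then 1 else -1)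

lemma colB_invB (d : Fin 6 × Bool) : colB (invB d) = d := by
  obtain ⟨x, t⟩ := d; cases t <;> simp [colB, invB, eB]

lemma mem_allCB (d : Fin 6 × Bool) : d ∈ allCB := by
  obtain ⟨x, t⟩ := d
  simp [allCB]
  cases t <;> simp

lemma adm_iff (s01 s12 s23 s14 : ℤˣ) (c₃ c₄ c : ColorC) :
    adm s01 s12 s23 s14 c₃ c₄ c ↔
      admB (eB s01) (eB s12) (eB s23) (eB s14) (colB c₃) (colB c₄) (colB c) = true := by
  simp only [adm, admB, List.any_eq_true, Bool.and_eq_true]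
  constructor
  · rintro ⟨b1, h1, h4, b2, h2, h3⟩
    exact ⟨colB b1, mem_allCB _, ⟨(compat_iff _ _ _).1 h1, (compat_iff _ _ _).1 h4⟩,
      colB b2, mem_allCB _, (compat_iff _ _ _).1 h2, (compat_iff _ _ _).1 h3⟩
  · rintro ⟨d1, -, ⟨h1, h4⟩, d2, -, h2, h3⟩
    refine ⟨invB d1, ?_, ?_, invB d2, ?_, ?_⟩ <;>
      rw [compat_iff] <;> simp [colB_invB, h1, h2, h3, h4]

instance admDec (s01 s12 s23 s14 : ℤˣ) (c₃ c₄ c : ColorC) :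
    Decidable (adm s01 s12 s23 s14 c₃ c₄ c) :=
  decidable_of_iff _ (adm_iff s01 s12 s23 s14 c₃ c₄ c).symm

set_option maxHeartbeats 8000000 in
lemma card8 : ∀ (s01 s12 s23 s14 : ℤˣ) (c₃ c₄ : ColorC),
    8 ≤ (Finset.univ.filter (adm s01 s12 s23 s14 c₃ c₄)).card := by decide

lemma dsgSign_comm (a b : ColorC) : dsgSign a b = dsgSign b a := by
  unfold dsgSign
  rcases eq_or_ne ((a.1 : ℕ)/2) ((b.1 : ℕ)/2) with h | h
  · rw [if_pos h, if_pos h.symm, mul_comm a.2]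
  · rw [if_neg h, if_neg (Ne.symm h), mul_comm a.2]

lemma adm_mem (σ : Sym2 (Fin 5) → ℤˣ) (c₃ c₄ c : ColorC)
    (h : adm (σ s(0,1)) (σ s(1,2)) (σ s(2,3)) (σ s(1,4)) c₃ c₄ c) :
    c ∈ {c : ColorC |
        ∃ φ, IsLColoring treeT σ ![Set.univ, Set.univ, Set.univ, {c₃}, {c₄}] φ ∧ φ 0 = c} := by
  obtain ⟨b1, ⟨n1, e1⟩, ⟨n4, e4⟩, b2, ⟨n2, e2⟩, ⟨n3, e3⟩⟩ := h
  refine ⟨![c, b1, b2, c₃, c₄], ⟨?_, ?_⟩, rfl⟩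
  · intro w; fin_cases w <;> simp
  · intro u v huv
    rw [treeT, SimpleGraph.fromEdgeSet_adj] at huv
    obtain ⟨hm, -⟩ := huv
    fin_cases u <;> fin_cases v <;>
      first
      | (exfalso; revert hm; decide)
      | exact ⟨n1, e1⟩
      | exact ⟨n2, e2⟩
      | exact ⟨n3, e3⟩
      | exact ⟨n4, e4⟩
      | exact ⟨Ne.symm n1, by rw [Sym2.eq_swap]; exact (dsgSign_comm _ _) ▸ e1⟩
      | exact ⟨Ne.symm n2, by rw [Sym2.eq_swap]; exact (dsgSign_comm _ _) ▸ e2⟩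
      | exact ⟨Ne.symm n3, by rw [Sym2.eq_swap]; exact (dsgSign_comm _ _) ▸ e3⟩
      | exact ⟨Ne.symm n4, by rw [Sym2.eq_swap]; exact (dsgSign_comm _ _) ▸ e4⟩

/-- Lemma 3.5: for the signed rooted tree `treeT` with `L(v₁')` and `L(v₂)` singletons and full
lists elsewhere, at least 8 colors are admissible at the root `v`. -/
theorem admissible_tree_ge_eight (σ : Sym2 (Fin 5) → ℤˣ) (c₃ c₄ : ColorC) :
    8 ≤ {c : ColorC |
        ∃ φ, IsLColoring treeT σ ![Set.univ, Set.univ, Set.univ, {c₃}, {c₄}] φ ∧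
          φ 0 = c}.ncard := by
  refine le_trans (card8 (σ s(0,1)) (σ s(1,2)) (σ s(2,3)) (σ s(1,4)) c₃ c₄) ?_
  rw [← Set.ncard_coe_finset]
  exact Set.ncard_le_ncard
    (fun c hc => adm_mem σ c₃ c₄ c (by simpa using hc)) (Set.toFinite _)
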